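/- Assume J = 2 and b_1 ≥ b_2. Let θ : K → ℝ be nonnegative, satisfy the reduced balance equations, and have total mass Σ_{k∈K} θ(k) = 1; write θ(k_1,k_2) for its values. Then for every integer ℓ_1 with b_1 − b_2 + 1 ≤ ℓ_1 ≤ b_1 − 1: (Σ_{k_2=0}^{b_2} θ(ℓ_1, k_2)) · λ_1 = θ(ℓ_1 − 1, ℓ_1 − 1 − b_1 + b_2) · ν/2 + (Σ_{k_2 = ℓ_1 − b_1 + b_2}^{b_2} θ(ℓ_1 − 1, k_2)) · ν. -/

import Mathlib

open Finset

/-- `k + e_i`: add one unit in coordinate `i`. -/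
def addE {J : ℕ} (k : Fin J → ℕ) (i : Fin J) : Fin J → ℕ :=
  Function.update k i (k i + 1)

/-- `k - e_i`: remove one unit in coordinate `i`. -/
def subE {J : ℕ} (k : Fin J → ℕ) (i : Fin J) : Fin J → ℕ :=
  Function.update k i (k i - 1)

/-- The set `M(k)` of locations attaining the maximal difference `b_i - k_i`. -/
def Mset {J : ℕ} (b k : Fin J → ℕ) : Finset (Fin J) :=
  Finset.univ.filter (fun i => b i - k i = Finset.univ.sup (fun j => b j - k j))

/-- Routing probability `p_i(k)` (strict load balancing policy). -/
noncomputable def routeP {J : ℕ} (b k : Fin J → ℕ) (i : Fin J) : ℝ :=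
  if i ∈ Mset b k then 1 / ((Mset b k).card : ℝ) else 0

/-- The inventory state space `K = {k : 0 ≤ k_j ≤ b_j}` as a `Finset`. -/
def Kfin {J : ℕ} (b : Fin J → ℕ) : Finset (Fin J → ℕ) :=
  Fintype.piFinset fun j => Finset.range (b j + 1)

/-- The reduced balance equation at a single state `k`. -/
def RBEat {J : ℕ} (lam : Fin J → ℝ) (b : Fin J → ℕ) (ν : ℝ)
    (θ : (Fin J → ℕ) → ℝ) (k : Fin J → ℕ) : Prop :=
  θ k * ((∑ i ∈ Finset.univ.filter (fun i => 0 < k i), lam i)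
      + ∑ i ∈ Finset.univ.filter (fun i => k i < b i), ν * routeP b k i)
    = (∑ i ∈ Finset.univ.filter (fun i => k i < b i), θ (addE k i) * lam i)
      + ∑ i ∈ Finset.univ.filter (fun i => 0 < k i),
          θ (subE k i) * ν * routeP b (subE k i) i

/-- `θ` satisfies the reduced balance equations (at every `k ∈ K`). -/
def ReducedBalance {J : ℕ} (lam : Fin J → ℝ) (b : Fin J → ℕ) (ν : ℝ)
    (θ : (Fin J → ℕ) → ℝ) : Prop :=
  ∀ k : Fin J → ℕ, (∀ j, k j ≤ b j) → RBEat lam b ν θ k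

/-- The global balance equation at a single state `(n, k)`. -/
def GBEat {J : ℕ} (lam : Fin J → ℝ) (b : Fin J → ℕ) (μ : Fin J → ℕ → ℝ) (ν : ℝ)
    (x : (Fin J → ℕ) → (Fin J → ℕ) → ℝ) (n k : Fin J → ℕ) : Prop :=
  x n k * ((∑ i ∈ Finset.univ.filter (fun i => 0 < k i), lam i)
      + (∑ i ∈ Finset.univ.filter (fun i => 0 < n i ∧ 0 < k i), μ i (n i))
      + ∑ i ∈ Finset.univ.filter (fun i => k i < b i), ν * routeP b k i)
    = (∑ i ∈ Finset.univ.filter (fun i => 0 < n i ∧ 0 < k i), x (subE n i) k * lam i)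
      + (∑ i ∈ Finset.univ.filter (fun i => k i < b i),
          x (addE n i) (addE k i) * μ i (n i + 1))
      + ∑ i ∈ Finset.univ.filter (fun i => 0 < k i),
          x n (subE k i) * ν * routeP b (subE k i) i

/-- `x` satisfies the global balance equations (at every `(n,k) ∈ ℕ^J × K`). -/
def GlobalBalance {J : ℕ} (lam : Fin J → ℝ) (b : Fin J → ℕ) (μ : Fin J → ℕ → ℝ)
    (ν : ℝ) (x : (Fin J → ℕ) → (Fin J → ℕ) → ℝ) : Prop :=
  ∀ n k : Fin J → ℕ, (∀ j, k j ≤ b j) → GBEat lam b μ ν x n k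

/-- `ξ̃_j(n) = ∏_{ℓ=1}^n λ_j / μ_j(ℓ)`. -/
noncomputable def xiT {J : ℕ} (lam : Fin J → ℝ) (μ : Fin J → ℕ → ℝ)
    (j : Fin J) (n : ℕ) : ℝ :=
  ∏ l ∈ Finset.Icc 1 n, lam j / μ j l

/-- `ξ̃(n) = ∏_j ξ̃_j(n_j)`. -/
noncomputable def xiTvec {J : ℕ} (lam : Fin J → ℝ) (μ : Fin J → ℕ → ℝ)
    (n : Fin J → ℕ) : ℝ :=
  ∏ j, xiT lam μ j (n j)

/-- The transition rates `q_red` of the reduced (inventory-replenishment) process. -/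
noncomputable def qred {J : ℕ} (lam : Fin J → ℝ) (b : Fin J → ℕ) (ν : ℝ)
    (k k' : Fin J → ℕ) : ℝ :=
  (∑ i : Fin J, (if 0 < k i ∧ k' = subE k i then lam i else 0))
    + ∑ i : Fin J, (if k i < b i ∧ k' = addE k i then ν * routeP b k i else 0)

/-- The candidate stationary measure for base stock levels all equal to one. -/
noncomputable def thetaOne {J : ℕ} (lam : Fin J → ℝ) (ν : ℝ)
    (k : Fin J → ℕ) : ℝ :=
  (∏ l ∈ Finset.range (∑ j, k j), 1 / ((J : ℝ) - (l : ℝ)))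
    * (∏ j, (1 / lam j) ^ (k j)) * (1 / ν) ^ (J - ∑ j, k j)

lemma Mset2 (b k : Fin 2 → ℕ) :
    Mset b k = if b 1 - k 1 < b 0 - k 0 then {0}
      else if b 0 - k 0 < b 1 - k 1 then {1} else Finset.univ := by
  have hsup : Finset.univ.sup (fun j => b j - k j) = max (b 0 - k 0) (b 1 - k 1) := by
    rw [show (Finset.univ : Finset (Fin 2)) = {0, 1} by decide]
    simp [Finset.sup_insert]
  unfold Mset
  rw [hsup]
  rcases lt_trichotomy (b 0 - k 0) (b 1 - k 1) with h | h | h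
  · rw [max_eq_right h.le, if_neg (by omega), if_pos h]
    ext i; fin_cases i <;> simp <;> omega
  · rw [h, max_self, if_neg (by omega), if_neg (by omega)]
    ext i; fin_cases i <;> simp [h]
  · rw [max_eq_left h.le, if_pos h]
    ext i; fin_cases i <;> simp <;> omega

lemma routeP0 (b k : Fin 2 → ℕ) :
    routeP b k 0 = if b 1 - k 1 < b 0 - k 0 then 1
      else if b 0 - k 0 < b 1 - k 1 then 0 else 1/2 := by
  rw [routeP, Mset2]
  split_ifs with h1 h2 <;> simp_all [Finset.card_univ] <;> norm_num

lemma routeP1 (b k : Fin 2 → ℕ) :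
    routeP b k 1 = if b 0 - k 0 < b 1 - k 1 then 1
      else if b 1 - k 1 < b 0 - k 0 then 0 else 1/2 := by
  rw [routeP, Mset2]
  split_ifs with h1 h2 <;> simp_all [Finset.card_univ] <;> omega

lemma addE0 (m n : ℕ) : addE ![m, n] 0 = ![m+1, n] := by
  funext i; fin_cases i <;> simp [addE, Function.update]

lemma addE1 (m n : ℕ) : addE ![m, n] 1 = ![m, n+1] := by
  funext i; fin_cases i <;> simp [addE, Function.update]

lemma subE0 (m n : ℕ) : subE ![m, n] 0 = ![m-1, n] := by
  funext i; fin_cases i <;> simp [subE, Function.update]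

lemma subE1 (m n : ℕ) : subE ![m, n] 1 = ![m, n-1] := by
  funext i; fin_cases i <;> simp [subE, Function.update]

lemma RBE2 {lam : Fin 2 → ℝ} {b : Fin 2 → ℕ} {ν : ℝ} {θ : (Fin 2 → ℕ) → ℝ}
    (m n : ℕ) (h : RBEat lam b ν θ ![m, n]) :
    θ ![m,n] * (((if 0 < m then lam 0 else 0) + (if 0 < n then lam 1 else 0))
      + ((if m < b 0 then ν * routeP b ![m,n] 0 else 0)
          + (if n < b 1 then ν * routeP b ![m,n] 1 else 0)))
    = ((if m < b 0 then θ ![m+1,n] * lam 0 else 0)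
        + (if n < b 1 then θ ![m,n+1] * lam 1 else 0))
      + ((if 0 < m then θ ![m-1,n] * ν * routeP b ![m-1,n] 0 else 0)
          + (if 0 < n then θ ![m,n-1] * ν * routeP b ![m,n-1] 1 else 0)) := by
  unfold RBEat at h
  simp only [Finset.sum_filter, Fin.sum_univ_two, Matrix.cons_val_zero, Matrix.cons_val_one,
    Matrix.head_cons, addE0, addE1, subE0, subE1] at h
  exact h

lemma P1sum {b : Fin 2 → ℕ} (hb12 : b 1 ≤ b 0) (f : ℕ → ℝ)
    (m : ℕ) (hm : b 0 - b 1 ≤ m) (hmb : m < b 0) :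
    ∑ n ∈ Finset.range (b 1 + 1), f n * routeP b ![m, n] 0
      = f (m - (b 0 - b 1)) * (1/2)
        + ∑ n ∈ Finset.Icc (m + 1 - (b 0 - b 1)) (b 1), f n := by
  set d := b 0 - b 1 with hdd
  have hd : b 1 + d = b 0 := by omega
  have hval : ∀ n ∈ Finset.range (b 1 + 1), f n * routeP b ![m, n] 0 =
      if n < m - d then 0 else if n = m - d then f n * (1/2) else f n := by
    intro n hn
    simp only [Finset.mem_range] at hn
    rw [routeP0]
    show f n * (if b 1 - n < b 0 - m then (1:ℝ) else if b 0 - m < b 1 - n then 0 else 1/2) = _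
    rcases lt_trichotomy n (m - d) with h | h | h
    · rw [if_neg (by omega), if_pos (by omega), if_pos h]; ring
    · rw [if_neg (by omega), if_neg (by omega), if_neg (by omega), if_pos h]
    · rw [if_pos (by omega), if_neg (by omega), if_neg (by omega)]; ring
  rw [Finset.sum_congr rfl hval, Finset.range_eq_Ico,
    ← Finset.sum_Ico_consecutive _ (Nat.zero_le (m - d)) (show m - d ≤ b 1 + 1 by omega),
    Finset.sum_eq_sum_Ico_succ_bot (show m - d < b 1 + 1 by omega)]
  have h1 : ∑ n ∈ Finset.Ico 0 (m - d), (if n < m - d then (0:ℝ)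
      else if n = m - d then f n * (1/2) else f n) = 0 := by
    apply Finset.sum_eq_zero
    intro n hn
    simp only [Finset.mem_Ico] at hn
    rw [if_pos hn.2]
  have h2 : ∑ n ∈ Finset.Ico (m - d + 1) (b 1 + 1), (if n < m - d then (0:ℝ)
      else if n = m - d then f n * (1/2) else f n)
      = ∑ n ∈ Finset.Icc (m + 1 - d) (b 1), f n := by
    rw [show m - d + 1 = m + 1 - d by omega, ← Finset.Ico_add_one_right_eq_Icc]
    apply Finset.sum_congr rfl
    intro n hn
    simp only [Finset.mem_Ico] at hn
    rw [if_neg (by omega), if_neg (by omega)]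
  rw [h1, h2, if_neg (by omega), if_pos rfl]
  ring

lemma shiftSum (g : ℕ → ℝ) (N : ℕ) :
    ∑ n ∈ Finset.range (N+1), (if 0 < n then g n else 0)
      = ∑ n ∈ Finset.range (N+1), (if n < N then g (n+1) else 0) := by
  rw [Finset.sum_range_succ' (fun n => if 0 < n then g n else 0) N,
      Finset.sum_range_succ (fun n => if n < N then g (n+1) else 0) N]
  rw [if_neg (lt_irrefl 0), if_neg (lt_irrefl N), add_zero, add_zero]
  apply Finset.sum_congr rfl
  intro n hn
  simp only [Finset.mem_range] at hn
  rw [if_pos (Nat.succ_pos n), if_pos hn]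

lemma column {lam : Fin 2 → ℝ} {b : Fin 2 → ℕ} {ν : ℝ} {θ : (Fin 2 → ℕ) → ℝ}
    (hbal : ReducedBalance lam b ν θ) (hb12 : b 1 ≤ b 0)
    (m : ℕ) (hm1 : b 0 - b 1 + 1 ≤ m) (hm2 : m ≤ b 0) :
    (∑ n ∈ Finset.range (b 1 + 1), θ ![m, n]) * lam 0
      + (if m < b 0 then
          θ ![m, m - (b 0 - b 1)] * (ν/2)
            + (∑ n ∈ Finset.Icc (m + 1 - (b 0 - b 1)) (b 1), θ ![m, n]) * ν
        else 0)
    = (if m < b 0 then (∑ n ∈ Finset.range (b 1 + 1), θ ![m+1, n]) * lam 0 else 0)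
      + (θ ![m-1, m - 1 - (b 0 - b 1)] * (ν/2)
          + (∑ n ∈ Finset.Icc (m - (b 0 - b 1)) (b 1), θ ![m-1, n]) * ν) := by
  set d := b 0 - b 1 with hdd
  have hm0 : 0 < m := by omega
  have E : ∑ n ∈ Finset.range (b 1 + 1),
        (θ ![m,n] * lam 0
          + (if 0 < n then θ ![m,n] * lam 1 else 0)
          + (if m < b 0 then θ ![m,n] * (ν * routeP b ![m,n] 0) else 0)
          + (if n < b 1 then θ ![m,n] * (ν * routeP b ![m,n] 1) else 0))
      = ∑ n ∈ Finset.range (b 1 + 1),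
        ((if m < b 0 then θ ![m+1,n] * lam 0 else 0)
          + (if n < b 1 then θ ![m,n+1] * lam 1 else 0)
          + θ ![m-1,n] * ν * routeP b ![m-1,n] 0
          + (if 0 < n then θ ![m,n-1] * ν * routeP b ![m,n-1] 1 else 0)) := by
    apply Finset.sum_congr rfl
    intro n hn
    simp only [Finset.mem_range] at hn
    have h := RBE2 m n (hbal ![m,n] (by
      rw [Fin.forall_fin_two]
      simp only [Matrix.cons_val_zero, Matrix.cons_val_one, Matrix.head_cons]
      omega))
    rw [if_pos hm0] at h
    calc _ = θ ![m,n] * ((lam 0 + (if 0 < n then lam 1 else 0))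
          + ((if m < b 0 then ν * routeP b ![m,n] 0 else 0)
              + (if n < b 1 then ν * routeP b ![m,n] 1 else 0))) := by
            split_ifs <;> ring
      _ = _ := by
            rw [h, if_pos hm0]
            ring
  rw [Finset.sum_add_distrib, Finset.sum_add_distrib, Finset.sum_add_distrib,
      Finset.sum_add_distrib, Finset.sum_add_distrib, Finset.sum_add_distrib] at E
  -- vertical λ₂ cancellation
  have F2 : ∑ n ∈ Finset.range (b 1 + 1), (if 0 < n then θ ![m,n] * lam 1 else 0)
      = ∑ n ∈ Finset.range (b 1 + 1), (if n < b 1 then θ ![m,n+1] * lam 1 else 0) :=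
    shiftSum (fun n => θ ![m,n] * lam 1) (b 1)
  -- vertical ν p₂ cancellation
  have F3 : ∑ n ∈ Finset.range (b 1 + 1),
        (if 0 < n then θ ![m,n-1] * ν * routeP b ![m,n-1] 1 else 0)
      = ∑ n ∈ Finset.range (b 1 + 1),
        (if n < b 1 then θ ![m,n] * (ν * routeP b ![m,n] 1) else 0) := by
    rw [shiftSum (fun n => θ ![m,n-1] * ν * routeP b ![m,n-1] 1) (b 1)]
    apply Finset.sum_congr rfl
    intro n hn
    split_ifs with h
    · rw [Nat.add_sub_cancel]; ring
    · rfl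
  -- ν p₁ in-flow
  have F5 : ∑ n ∈ Finset.range (b 1 + 1), θ ![m-1,n] * ν * routeP b ![m-1,n] 0
      = θ ![m-1, m - 1 - d] * (ν/2)
          + (∑ n ∈ Finset.Icc (m - d) (b 1), θ ![m-1,n]) * ν := by
    have := P1sum hb12 (fun n => θ ![m-1,n] * ν) (m-1) (by omega) (by omega)
    rw [show m - 1 + 1 - d = m - d by omega] at this
    calc ∑ n ∈ Finset.range (b 1 + 1), θ ![m-1,n] * ν * routeP b ![m-1,n] 0
        = θ ![m-1, m-1-d] * ν * (1/2) + ∑ n ∈ Finset.Icc (m - d) (b 1), θ ![m-1,n] * ν := this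
      _ = _ := by rw [← Finset.sum_mul]; ring
  -- ν p₁ out-flow (only when m < b 0)
  have F4 : ∑ n ∈ Finset.range (b 1 + 1),
        (if m < b 0 then θ ![m,n] * (ν * routeP b ![m,n] 0) else 0)
      = if m < b 0 then
          θ ![m, m - d] * (ν/2) + (∑ n ∈ Finset.Icc (m + 1 - d) (b 1), θ ![m,n]) * ν
        else 0 := by
    split_ifs with h
    · have := P1sum hb12 (fun n => θ ![m,n] * ν) m (by omega) h
      calc ∑ n ∈ Finset.range (b 1 + 1), θ ![m,n] * (ν * routeP b ![m,n] 0)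
          = ∑ n ∈ Finset.range (b 1 + 1), θ ![m,n] * ν * routeP b ![m,n] 0 := by
            apply Finset.sum_congr rfl; intro n _; ring
        _ = θ ![m, m-d] * ν * (1/2) + ∑ n ∈ Finset.Icc (m + 1 - d) (b 1), θ ![m,n] * ν := this
        _ = _ := by rw [← Finset.sum_mul]; ring
    · exact Finset.sum_eq_zero fun n _ => rfl
  -- λ₁ terms
  have F1 : ∑ n ∈ Finset.range (b 1 + 1), θ ![m,n] * lam 0
      = (∑ n ∈ Finset.range (b 1 + 1), θ ![m,n]) * lam 0 := by
    rw [Finset.sum_mul]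
  have R1 : ∑ n ∈ Finset.range (b 1 + 1), (if m < b 0 then θ ![m+1,n] * lam 0 else 0)
      = if m < b 0 then (∑ n ∈ Finset.range (b 1 + 1), θ ![m+1,n]) * lam 0 else 0 := by
    split_ifs with h
    · rw [Finset.sum_mul]
    · exact Finset.sum_eq_zero fun n _ => rfl
  rw [F1, F2, F3, F4, F5, R1] at E
  linarith [E]

lemma keylem {lam : Fin 2 → ℝ} {b : Fin 2 → ℕ} {ν : ℝ} {θ : (Fin 2 → ℕ) → ℝ}
    (hbal : ReducedBalance lam b ν θ) (hb12 : b 1 ≤ b 0) :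
    ∀ j m : ℕ, b 0 - b 1 + 1 ≤ m → m + j = b 0 →
      (∑ n ∈ Finset.range (b 1 + 1), θ ![m, n]) * lam 0
        = θ ![m-1, m - 1 - (b 0 - b 1)] * (ν/2)
            + (∑ n ∈ Finset.Icc (m - (b 0 - b 1)) (b 1), θ ![m-1, n]) * ν := by
  intro j
  induction j with
  | zero =>
    intro m hm1 hm2
    have h := column hbal hb12 m hm1 (by omega)
    rw [if_neg (by omega), if_neg (by omega)] at h
    linarith
  | succ j ih =>
    intro m hm1 hm2
    have h := column hbal hb12 m hm1 (by omega)
    rw [if_pos (by omega), if_pos (by omega)] at h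
    have h2 := ih (m+1) (by omega) (by omega)
    rw [Nat.add_sub_cancel] at h2
    linarith

/-- two heterogeneous locations, cut balance for
`b₁ - b₂ + 1 ≤ ℓ₁ ≤ b₁ - 1`. -/
theorem two_locations_marginal_Y1_mid
    (lam : Fin 2 → ℝ) (hlam : ∀ j, 0 < lam j)
    (b : Fin 2 → ℕ) (hb : ∀ j, 1 ≤ b j) (hb12 : b 1 ≤ b 0)
    (ν : ℝ) (hν : 0 < ν)
    (θ : (Fin 2 → ℕ) → ℝ)
    (hθnn : ∀ k : Fin 2 → ℕ, (∀ j, k j ≤ b j) → 0 ≤ θ k)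
    (hbal : ReducedBalance lam b ν θ)
    (hmass : ∑ k ∈ Kfin b, θ k = 1) :
    ∀ ℓ₁ : ℕ, b 0 - b 1 + 1 ≤ ℓ₁ → ℓ₁ ≤ b 0 - 1 →
      (∑ k₂ ∈ Finset.range (b 1 + 1), θ ![ℓ₁, k₂]) * lam 0
        = θ ![ℓ₁ - 1, ℓ₁ - 1 - (b 0 - b 1)] * (ν / 2)
          + (∑ k₂ ∈ Finset.Icc (ℓ₁ - (b 0 - b 1)) (b 1), θ ![ℓ₁ - 1, k₂]) * ν := by
  intro l1 h1 h2
  exact keylem hbal hb12 (b 0 - l1) l1 h1 (by omega)
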